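/- Duval–Reiner identity: let T be a self-adjoint linear operator on the finite inner product space of real functions on X with weight ω, let f be a function on X, let {Q_j}_{j=1}^k be a partition of X, set f_i := f·χ_{Q_i}, and let c_1, …, c_k be scalars, ζ ∈ ℝ, and g := ∑_i c_i f_i. Then ⟨T g, g⟩_ω − ζ‖g‖²_{2,ω} = ∑_{i=1}^k c_i² ⟨T f − ζ f, f_i⟩_ω − (1/2) ∑_{i,j=1}^k (c_i − c_j)² ⟨T f_j, f_i⟩_ω. -/

import Mathlib

open Finset

theorem duval_reiner_identity {X : Type*} [Fintype X] [DecidableEq X]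
    (ω : X → ℝ) (hω : ∀ x, 0 < ω x)
    (T : (X → ℝ) →ₗ[ℝ] (X → ℝ))
    (hT : ∀ f g : X → ℝ, ∑ x, T f x * g x * ω x = ∑ x, f x * T g x * ω x)
    (f : X → ℝ) (k : ℕ) (Q : Fin k → Finset X)
    (hQdisj : Pairwise (Function.onFun Disjoint Q))
    (hQcover : Finset.univ.biUnion Q = Finset.univ)
    (fi : Fin k → X → ℝ) (hfi : ∀ i x, fi i x = if x ∈ Q i then f x else 0)
    (c : Fin k → ℝ) (ζ : ℝ) (g : X → ℝ) (hg : ∀ x, g x = ∑ i, c i * fi i x) :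
    ∑ x, T g x * g x * ω x - ζ * ∑ x, g x ^ 2 * ω x
      = ∑ i, (c i) ^ 2 * (∑ x, (T f x - ζ * f x) * fi i x * ω x)
        - (1 / 2) * ∑ i, ∑ j, (c i - c j) ^ 2 * (∑ x, T (fi j) x * fi i x * ω x) := by
  classical
  set a : Fin k → Fin k → ℝ := fun i j => ∑ x, T (fi j) x * fi i x * ω x with ha
  set b : Fin k → ℝ := fun i => ∑ x, fi i x ^ 2 * ω x with hb
  have hsym : ∀ i j, a i j = a j i := by
    intro i j
    simp only [ha]
    rw [hT]
    exact Finset.sum_congr rfl fun x _ => by ring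
  have horth : ∀ i j, i ≠ j → ∀ x, fi i x * fi j x = 0 := by
    intro i j hij x
    rw [hfi, hfi]
    by_cases hxi : x ∈ Q i
    · have hxj : x ∉ Q j := fun hxj => Finset.disjoint_left.mp (hQdisj hij) hxi hxj
      simp [hxi, hxj]
    · simp [hxi]
  have hfdec : ∀ x, f x = ∑ i, fi i x := by
    intro x
    have hx : x ∈ Finset.univ.biUnion Q := by rw [hQcover]; exact mem_univ x
    obtain ⟨i0, -, hi0⟩ := Finset.mem_biUnion.mp hx
    rw [Finset.sum_eq_single i0]
    · rw [hfi]; simp [hi0]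
    · intro j _ hj
      have hxj : x ∉ Q j := fun hxj => Finset.disjoint_left.mp (hQdisj hj) hxj hi0
      rw [hfi]; simp [hxj]
    · simp
  have hffun : f = ∑ i, fi i := by
    funext x; rw [hfdec x]; simp [Finset.sum_apply]
  have hgfun : g = ∑ i, c i • fi i := by
    funext x; rw [hg x]; simp [Finset.sum_apply]
  have hTg : ∀ x, T g x = ∑ i, c i * T (fi i) x := by
    intro x
    rw [hgfun, map_sum]
    simp [Finset.sum_apply]
  have hTf : ∀ x, T f x = ∑ j, T (fi j) x := by
    intro x
    rw [hffun, map_sum]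
    simp [Finset.sum_apply]
  -- LHS first term
  have h1 : ∑ x, T g x * g x * ω x = ∑ i, ∑ j, c i * c j * a j i := by
    have : ∀ x, T g x * g x * ω x = ∑ i, ∑ j, c i * c j * (T (fi i) x * fi j x * ω x) := by
      intro x
      rw [hTg x, hg x, Finset.sum_mul_sum, Finset.sum_mul]
      exact Finset.sum_congr rfl fun i _ => by
        rw [Finset.sum_mul]
        exact Finset.sum_congr rfl fun j _ => by ring
    simp_rw [this]
    rw [Finset.sum_comm]
    refine Finset.sum_congr rfl fun i _ => ?_
    rw [Finset.sum_comm]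
    refine Finset.sum_congr rfl fun j _ => ?_
    rw [← Finset.mul_sum]
  -- LHS second term
  have h2 : ∑ x, g x ^ 2 * ω x = ∑ i, c i ^ 2 * b i := by
    have hpt : ∀ x, g x ^ 2 = ∑ i, c i ^ 2 * fi i x ^ 2 := by
      intro x
      rw [hg x, sq, Finset.sum_mul_sum]
      refine Finset.sum_congr rfl fun i _ => ?_
      rw [Finset.sum_eq_single i]
      · ring
      · intro j _ hj
        have h0 := horth i j (Ne.symm hj) x
        linear_combination c i * c j * h0
      · simp
    simp_rw [hpt, Finset.sum_mul]
    rw [Finset.sum_comm]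
    refine Finset.sum_congr rfl fun i _ => ?_
    rw [hb, Finset.mul_sum]
    exact Finset.sum_congr rfl fun x _ => by ring
  -- RHS first term
  have h3 : ∀ i, ∑ x, (T f x - ζ * f x) * fi i x * ω x = (∑ j, a i j) - ζ * b i := by
    intro i
    have hpt : ∀ x, (T f x - ζ * f x) * fi i x * ω x
        = (∑ j, T (fi j) x * fi i x * ω x) - ζ * (fi i x ^ 2 * ω x) := by
      intro x
      have hfx : f x * fi i x = fi i x ^ 2 := by
        rw [hfdec x, Finset.sum_mul, Finset.sum_eq_single i]
        · ring
        · intro j _ hj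
          have := horth j i hj x
          linarith
        · simp
      rw [hTf x, sub_mul, sub_mul, Finset.sum_mul, Finset.sum_mul]
      congr 1
      linear_combination ζ * ω x * hfx
    simp_rw [hpt]
    rw [Finset.sum_sub_distrib, Finset.sum_comm, ← Finset.mul_sum]
  rw [h1, h2]
  simp_rw [h3]
  -- expand and finish by symmetry
  rw [show (∑ i, ∑ j, (c i - c j) ^ 2 * (∑ x, T (fi j) x * fi i x * ω x)) = ∑ i, ∑ j, (c i - c j) ^ 2 * a i j from rfl]
  have expand : ∀ i j, (c i - c j) ^ 2 * a i j
      = c i ^ 2 * a i j + c j ^ 2 * a i j - 2 * (c i * c j * a i j) := fun i j => by ring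
  simp only [expand, Finset.sum_add_distrib, Finset.sum_sub_distrib, mul_sub,
    Finset.mul_sum]
  have e1 : ∑ i, ∑ j, c i * c j * a j i = ∑ i, ∑ j, c i * c j * a i j := by
    rw [Finset.sum_comm]
    exact Finset.sum_congr rfl fun i _ => Finset.sum_congr rfl fun j _ => by
      rw [hsym]; ring
  have e2 : ∑ i, ∑ j, c j ^ 2 * a i j = ∑ i, ∑ j, c i ^ 2 * a i j := by
    rw [Finset.sum_comm]
    exact Finset.sum_congr rfl fun i _ => Finset.sum_congr rfl fun j _ => by
      rw [hsym]
  rw [e1, e2]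
  have eb : ∑ i, ζ * c i ^ 2 * b i = ∑ i, c i ^ 2 * ζ * b i :=
    Finset.sum_congr rfl fun i _ => by ring
  have ed : ∑ i, ∑ j, 1 * c i * c j * a i j = ∑ i, ∑ j, c i * c j * a i j :=
    Finset.sum_congr rfl fun i _ => Finset.sum_congr rfl fun j _ => by ring
  ring_nf
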